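/- Let X_N, X_W, X_S, X_E be complex numbers of modulus 1 with X_N X_W X_S X_E = 1, and suppose Y_D = X_D for each D ∈ {N, W, S, E} (with all X_D ≠ 1). Then the Miquel mutation recurrence Y'_N = Y_N · [(1 − (1−X_W^{-1})(1−Y_N^{-1})/((1−Y_W)(1−X_N)))(1 − (1−X_E^{-1})(1−Y_N^{-1})/((1−Y_E)(1−X_N)))] / [(1 − (1−X_W)(1−Y_N)/((1−Y_W^{-1})(1−X_N^{-1})))(1 − (1−X_E)(1−Y_N)/((1−Y_E^{-1})(1−X_N^{-1})))] evaluates to Y'_N = X_S. -/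

import Mathlib

lemma aux0 (A : ℂ) (hA : A ≠ 0) (hA1 : A ≠ 1) : (1 : ℂ) - A⁻¹ ≠ 0 := by
  have : (1 : ℂ) - A⁻¹ = (A - 1) / A := by field_simp
  rw [this]; exact div_ne_zero (sub_ne_zero.mpr hA1) hA

lemma aux1 (A B : ℂ) (hA : A ≠ 0) (hA1 : A ≠ 1) (hB : B ≠ 0) (hB1 : B ≠ 1) :
    1 - (1 - A) * (1 - B) / ((1 - A⁻¹) * (1 - B⁻¹)) = 1 - A * B := by
  have h : (1 - A) * (1 - B) / ((1 - A⁻¹) * (1 - B⁻¹)) = A * B := by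
    rw [div_eq_iff (mul_ne_zero (aux0 A hA hA1) (aux0 B hB hB1))]
    field_simp; ring
  rw [h]

lemma aux2 (A B : ℂ) (hA : A ≠ 0) (hA1 : A ≠ 1) (hB : B ≠ 0) (hB1 : B ≠ 1) :
    1 - (1 - A⁻¹) * (1 - B⁻¹) / ((1 - A) * (1 - B)) = 1 - (A * B)⁻¹ := by
  have h1 : (1 : ℂ) - A ≠ 0 := sub_ne_zero.mpr (Ne.symm hA1)
  have h2 : (1 : ℂ) - B ≠ 0 := sub_ne_zero.mpr (Ne.symm hB1)
  have h : (1 - A⁻¹) * (1 - B⁻¹) / ((1 - A) * (1 - B)) = (A * B)⁻¹ := by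
    rw [div_eq_iff (mul_ne_zero h1 h2)]
    field_simp; ring
  rw [h]

theorem stmt18 (XN XW XS XE YN YW YS YE : ℂ)
    (hNnorm : ‖XN‖ = 1) (hWnorm : ‖XW‖ = 1)
    (hSnorm : ‖XS‖ = 1) (hEnorm : ‖XE‖ = 1)
    (hprod : XN * XW * XS * XE = 1)
    (hN1 : XN ≠ 1) (hW1 : XW ≠ 1) (hS1 : XS ≠ 1) (hE1 : XE ≠ 1)
    (hYN : YN = XN) (hYW : YW = XW) (hYS : YS = XS) (hYE : YE = XE)
    (hden1 : 1 - (1 - XW) * (1 - YN) / ((1 - YW⁻¹) * (1 - XN⁻¹)) ≠ 0)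
    (hden2 : 1 - (1 - XE) * (1 - YN) / ((1 - YE⁻¹) * (1 - XN⁻¹)) ≠ 0) :
    YN * ((1 - (1 - XW⁻¹) * (1 - YN⁻¹) / ((1 - YW) * (1 - XN))) *
          (1 - (1 - XE⁻¹) * (1 - YN⁻¹) / ((1 - YE) * (1 - XN)))) /
        ((1 - (1 - XW) * (1 - YN) / ((1 - YW⁻¹) * (1 - XN⁻¹))) *
          (1 - (1 - XE) * (1 - YN) / ((1 - YE⁻¹) * (1 - XN⁻¹))))
      = XS := by
  rw [hYN, hYW, hYE] at *
  have hN0 : XN ≠ 0 := fun h => by simp [h] at hNnorm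
  have hW0 : XW ≠ 0 := fun h => by simp [h] at hWnorm
  have hE0 : XE ≠ 0 := fun h => by simp [h] at hEnorm
  rw [aux1 XW XN hW0 hW1 hN0 hN1] at hden1 ⊢
  rw [aux1 XE XN hE0 hE1 hN0 hN1] at hden2 ⊢
  rw [aux2 XW XN hW0 hW1 hN0 hN1, aux2 XE XN hE0 hE1 hN0 hN1]
  have hWN : XW * XN ≠ 0 := mul_ne_zero hW0 hN0
  have hEN : XE * XN ≠ 0 := mul_ne_zero hE0 hN0
  field_simp
  have hd : (1 - XN * XW) * (1 - XN * XE) ≠ 0 := by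
    rw [mul_comm XN XW, mul_comm XN XE]; exact mul_ne_zero hden1 hden2
  rw [div_eq_iff hd]
  linear_combination (-(XN * XW - 1) * (XN * XE - 1)) * hprod
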